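/- Let a, b, c be real numbers with c ≠ 0. With G₂(x) = [[0, ax, 0],[0, 1, 0],[0, cx, 0]], G₁(x) = [[0, 2a, -2ax/c],[0, 0, -2/c],[0, 2c+2/c, -2x]], and G₀ = [[2+4/c², 0, -2a/c],[0, 2+4/c², 0],[0,0,0]], the following symmetry equations hold for all x ∈ ℝ: (i) G₂(x)·W(x) = W(x)·G₂(x)ᵀ; (ii) 2·(G₂·W)'(x) - G₁(x)·W(x) = W(x)·G₁(x)ᵀ; (iii) (G₂·W)''(x) - (G₁·W)'(x) + G₀·W(x) = W(x)·G₀ᵀ, where ' denotes the entrywise derivative in x. -/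

import Mathlib

open Matrix

/-- The 3×3 Hermite-type weight matrix. -/
noncomputable def W (a b c : ℝ) (x : ℝ) : Matrix (Fin 3) (Fin 3) ℝ :=
  Real.exp (-x ^ 2) •
    !![Real.exp (2 * b * x) + a ^ 2 * x ^ 2, a * x, a * c * x ^ 2;
       a * x, 1, c * x;
       a * c * x ^ 2, c * x, c ^ 2 * x ^ 2 + 1]

/-- Second-order coefficient of the operator D₂. -/
noncomputable def G2 (a c : ℝ) (x : ℝ) : Matrix (Fin 3) (Fin 3) ℝ :=
  !![0, a * x, 0; 0, 1, 0; 0, c * x, 0]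

/-- First-order coefficient of the operator D₂. -/
noncomputable def G1 (a c : ℝ) (x : ℝ) : Matrix (Fin 3) (Fin 3) ℝ :=
  !![0, 2 * a, -2 * a * x / c;
     0, 0, -2 / c;
     0, 2 * c + 2 / c, -2 * x]

/-- Zeroth-order coefficient of the operator D₂. -/
noncomputable def G0 (a c : ℝ) : Matrix (Fin 3) (Fin 3) ℝ :=
  !![2 + 4 / c ^ 2, 0, -2 * a / c;
     0, 2 + 4 / c ^ 2, 0;
     0, 0, 0]

/-- Entrywise derivative of a matrix-valued function. -/
noncomputable def mderiv (f : ℝ → Matrix (Fin 3) (Fin 3) ℝ) (x : ℝ) :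
    Matrix (Fin 3) (Fin 3) ℝ :=
  Matrix.of fun i j => deriv (fun y => f y i j) x

lemma finmk2 (h : 2 < 3) : (⟨2, h⟩ : Fin 3) = (2 : Fin 3) := rfl

lemma key (k0 k1 k2 k3 k4 x : ℝ) :
    HasDerivAt
      (fun y : ℝ => Real.exp (-y ^ 2) * (k0 + k1 * y + k2 * y ^ 2 + k3 * y ^ 3 + k4 * y ^ 4))
      (Real.exp (-x ^ 2) * (k1 + 2 * k2 * x + 3 * k3 * x ^ 2 + 4 * k4 * x ^ 3
        - 2 * x * (k0 + k1 * x + k2 * x ^ 2 + k3 * x ^ 3 + k4 * x ^ 4))) x := by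
  have hE : HasDerivAt (fun y : ℝ => Real.exp (-y ^ 2)) (Real.exp (-x ^ 2) * (-(2 * x))) x := by
    have h1 : HasDerivAt (fun y : ℝ => -y ^ 2) (-(2 * x)) x := by
      simpa using (hasDerivAt_pow 2 x).fun_neg
    exact h1.exp
  have h1 : HasDerivAt (fun y : ℝ => k1 * y) k1 x := by
    simpa using (hasDerivAt_id x).const_mul k1
  have h2 : HasDerivAt (fun y : ℝ => k2 * y ^ 2) (k2 * (2 * x)) x := by
    simpa using (hasDerivAt_pow 2 x).const_mul k2
  have h3 : HasDerivAt (fun y : ℝ => k3 * y ^ 3) (k3 * (3 * x ^ 2)) x := by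
    simpa using (hasDerivAt_pow 3 x).const_mul k3
  have h4 : HasDerivAt (fun y : ℝ => k4 * y ^ 4) (k4 * (4 * x ^ 3)) x := by
    simpa using (hasDerivAt_pow 4 x).const_mul k4
  have hq := ((((hasDerivAt_const x k0).fun_add h1).fun_add h2).fun_add h3).fun_add h4
  have := hE.fun_mul hq
  refine this.congr_deriv ?_
  ring

lemma derivEntry (k0 k1 k2 k3 k4 x : ℝ) :
    deriv (fun y : ℝ =>
        Real.exp (-y ^ 2) * (k0 + k1 * y + k2 * y ^ 2 + k3 * y ^ 3 + k4 * y ^ 4)) x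
      = Real.exp (-x ^ 2) * (k1 + 2 * k2 * x + 3 * k3 * x ^ 2 + 4 * k4 * x ^ 3
        - 2 * x * (k0 + k1 * x + k2 * x ^ 2 + k3 * x ^ 3 + k4 * x ^ 4)) :=
  (key k0 k1 k2 k3 k4 x).deriv

lemma GW_eq (a b c : ℝ) : (fun y => G2 a c y * W a b c y)
    = fun y : ℝ => Real.exp (-y ^ 2) •
      !![((0:ℝ) + (0)*y + (a^2)*y^2 + (0)*y^3 + (0)*y^4), ((0:ℝ) + (a)*y + (0)*y^2 + (0)*y^3 + (0)*y^4), ((0:ℝ) + (0)*y + (a*c)*y^2 + (0)*y^3 + (0)*y^4);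
       ((0:ℝ) + (a)*y + (0)*y^2 + (0)*y^3 + (0)*y^4), ((1:ℝ) + (0)*y + (0)*y^2 + (0)*y^3 + (0)*y^4), ((0:ℝ) + (c)*y + (0)*y^2 + (0)*y^3 + (0)*y^4);
       ((0:ℝ) + (0)*y + (a*c)*y^2 + (0)*y^3 + (0)*y^4), ((0:ℝ) + (c)*y + (0)*y^2 + (0)*y^3 + (0)*y^4), ((0:ℝ) + (0)*y + (c^2)*y^2 + (0)*y^3 + (0)*y^4)] := by
  funext y
  ext i j
  fin_cases i <;> fin_cases j <;>
    · simp [G2, W, Matrix.mul_apply, Matrix.transpose_apply, Fin.sum_univ_three]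
      try ring

lemma G1W_eq (a b c : ℝ) (hc : c ≠ 0) : (fun y => G1 a c y * W a b c y)
    = fun y : ℝ => Real.exp (-y ^ 2) •
      !![((0:ℝ) + (2*a^2)*y + (0)*y^2 + (-2*a^2)*y^3 + (0)*y^4), ((2*a:ℝ) + (0)*y + (-2*a)*y^2 + (0)*y^3 + (0)*y^4), ((0:ℝ) + (2*a*c - 2*a/c)*y + (0)*y^2 + (-2*a*c)*y^3 + (0)*y^4);
       ((0:ℝ) + (0)*y + (-2*a)*y^2 + (0)*y^3 + (0)*y^4), ((0:ℝ) + (-2)*y + (0)*y^2 + (0)*y^3 + (0)*y^4), ((-2/c:ℝ) + (0)*y + (-2*c)*y^2 + (0)*y^3 + (0)*y^4);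
       ((0:ℝ) + (2*a*c + 2*a/c)*y + (0)*y^2 + (-2*a*c)*y^3 + (0)*y^4), ((2*c + 2/c:ℝ) + (0)*y + (-2*c)*y^2 + (0)*y^3 + (0)*y^4), ((0:ℝ) + (2*c^2)*y + (0)*y^2 + (-2*c^2)*y^3 + (0)*y^4)] := by
  funext y
  ext i j
  fin_cases i <;> fin_cases j <;>
    · simp [G1, W, Matrix.mul_apply, Matrix.transpose_apply, Fin.sum_univ_three]
      try field_simp
      try ring

lemma mderiv_GW (a b c x : ℝ) : mderiv (fun y => G2 a c y * W a b c y) x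
    = Real.exp (-x ^ 2) •
      !![((0:ℝ) + (2*a^2)*x + (0)*x^2 + (-2*a^2)*x^3 + (0)*x^4), ((a:ℝ) + (0)*x + (-2*a)*x^2 + (0)*x^3 + (0)*x^4), ((0:ℝ) + (2*a*c)*x + (0)*x^2 + (-2*a*c)*x^3 + (0)*x^4);
       ((a:ℝ) + (0)*x + (-2*a)*x^2 + (0)*x^3 + (0)*x^4), ((0:ℝ) + (-2)*x + (0)*x^2 + (0)*x^3 + (0)*x^4), ((c:ℝ) + (0)*x + (-2*c)*x^2 + (0)*x^3 + (0)*x^4);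
       ((0:ℝ) + (2*a*c)*x + (0)*x^2 + (-2*a*c)*x^3 + (0)*x^4), ((c:ℝ) + (0)*x + (-2*c)*x^2 + (0)*x^3 + (0)*x^4), ((0:ℝ) + (2*c^2)*x + (0)*x^2 + (-2*c^2)*x^3 + (0)*x^4)] := by
  rw [GW_eq]
  ext i j
  fin_cases i <;> fin_cases j <;>
    · simp only [mderiv, Matrix.of_apply, Matrix.smul_apply, smul_eq_mul, Fin.mk_zero, Fin.mk_one, finmk2,
        Matrix.cons_val', Matrix.cons_val_zero, Matrix.cons_val_one, Matrix.head_cons,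
        Matrix.empty_val', Matrix.cons_val_fin_one, Matrix.head_fin_const, Fin.isValue,
        Matrix.cons_val_two, Matrix.tail_cons]
      rw [derivEntry]
      ring

lemma mderiv_mderiv_GW (a b c x : ℝ) :
    mderiv (mderiv (fun y => G2 a c y * W a b c y)) x
    = Real.exp (-x ^ 2) •
      !![((2*a^2:ℝ) + (0)*x + (-10*a^2)*x^2 + (0)*x^3 + (4*a^2)*x^4), ((0:ℝ) + (-6*a)*x + (0)*x^2 + (4*a)*x^3 + (0)*x^4), ((2*a*c:ℝ) + (0)*x + (-10*a*c)*x^2 + (0)*x^3 + (4*a*c)*x^4);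
       ((0:ℝ) + (-6*a)*x + (0)*x^2 + (4*a)*x^3 + (0)*x^4), ((-2:ℝ) + (0)*x + (4)*x^2 + (0)*x^3 + (0)*x^4), ((0:ℝ) + (-6*c)*x + (0)*x^2 + (4*c)*x^3 + (0)*x^4);
       ((2*a*c:ℝ) + (0)*x + (-10*a*c)*x^2 + (0)*x^3 + (4*a*c)*x^4), ((0:ℝ) + (-6*c)*x + (0)*x^2 + (4*c)*x^3 + (0)*x^4), ((2*c^2:ℝ) + (0)*x + (-10*c^2)*x^2 + (0)*x^3 + (4*c^2)*x^4)] := by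
  have h : mderiv (fun y => G2 a c y * W a b c y)
      = fun y : ℝ => Real.exp (-y ^ 2) •
      !![((0:ℝ) + (2*a^2)*y + (0)*y^2 + (-2*a^2)*y^3 + (0)*y^4), ((a:ℝ) + (0)*y + (-2*a)*y^2 + (0)*y^3 + (0)*y^4), ((0:ℝ) + (2*a*c)*y + (0)*y^2 + (-2*a*c)*y^3 + (0)*y^4);
       ((a:ℝ) + (0)*y + (-2*a)*y^2 + (0)*y^3 + (0)*y^4), ((0:ℝ) + (-2)*y + (0)*y^2 + (0)*y^3 + (0)*y^4), ((c:ℝ) + (0)*y + (-2*c)*y^2 + (0)*y^3 + (0)*y^4);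
       ((0:ℝ) + (2*a*c)*y + (0)*y^2 + (-2*a*c)*y^3 + (0)*y^4), ((c:ℝ) + (0)*y + (-2*c)*y^2 + (0)*y^3 + (0)*y^4), ((0:ℝ) + (2*c^2)*y + (0)*y^2 + (-2*c^2)*y^3 + (0)*y^4)] := funext fun y => mderiv_GW a b c y
  rw [h]
  ext i j
  fin_cases i <;> fin_cases j <;>
    · simp only [mderiv, Matrix.of_apply, Matrix.smul_apply, smul_eq_mul, Fin.mk_zero, Fin.mk_one, finmk2,
        Matrix.cons_val', Matrix.cons_val_zero, Matrix.cons_val_one, Matrix.head_cons,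
        Matrix.empty_val', Matrix.cons_val_fin_one, Matrix.head_fin_const, Fin.isValue,
        Matrix.cons_val_two, Matrix.tail_cons]
      rw [derivEntry]
      ring

lemma mderiv_G1W (a b c x : ℝ) (hc : c ≠ 0) : mderiv (fun y => G1 a c y * W a b c y) x
    = Real.exp (-x ^ 2) •
      !![((2*a^2:ℝ) + (0)*x + (-10*a^2)*x^2 + (0)*x^3 + (4*a^2)*x^4), ((0:ℝ) + (-8*a)*x + (0)*x^2 + (4*a)*x^3 + (0)*x^4), ((2*a*c - 2*a/c:ℝ) + (0)*x + (-10*a*c + 4*a/c)*x^2 + (0)*x^3 + (4*a*c)*x^4);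
       ((0:ℝ) + (-4*a)*x + (0)*x^2 + (4*a)*x^3 + (0)*x^4), ((-2:ℝ) + (0)*x + (4)*x^2 + (0)*x^3 + (0)*x^4), ((0:ℝ) + (-4*c + 4/c)*x + (0)*x^2 + (4*c)*x^3 + (0)*x^4);
       ((2*a*c + 2*a/c:ℝ) + (0)*x + (-10*a*c - 4*a/c)*x^2 + (0)*x^3 + (4*a*c)*x^4), ((0:ℝ) + (-8*c - 4/c)*x + (0)*x^2 + (4*c)*x^3 + (0)*x^4), ((2*c^2:ℝ) + (0)*x + (-10*c^2)*x^2 + (0)*x^3 + (4*c^2)*x^4)] := by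
  rw [G1W_eq a b c hc]
  ext i j
  fin_cases i <;> fin_cases j <;>
    · simp only [mderiv, Matrix.of_apply, Matrix.smul_apply, smul_eq_mul, Fin.mk_zero, Fin.mk_one, finmk2,
        Matrix.cons_val', Matrix.cons_val_zero, Matrix.cons_val_one, Matrix.head_cons,
        Matrix.empty_val', Matrix.cons_val_fin_one, Matrix.head_fin_const, Fin.isValue,
        Matrix.cons_val_two, Matrix.tail_cons]
      rw [derivEntry]
      ring

lemma G2t (a c x : ℝ) : (G2 a c x)ᵀ = !![0, 0, 0; a * x, 1, c * x; 0, 0, 0] := by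
  ext i j; fin_cases i <;> fin_cases j <;> · simp [G2]; try rfl

lemma G1t (a c x : ℝ) : (G1 a c x)ᵀ = !![0, 0, 0;
    2 * a, 0, 2 * c + 2 / c; -2 * a * x / c, -2 / c, -2 * x] := by
  ext i j; fin_cases i <;> fin_cases j <;> · simp [G1]; try rfl

lemma G0t (a c : ℝ) : (G0 a c)ᵀ = !![2 + 4 / c ^ 2, 0, 0;
    0, 2 + 4 / c ^ 2, 0; -2 * a / c, 0, 0] := by
  ext i j; fin_cases i <;> fin_cases j <;> · simp [G0]; try rfl

set_option maxHeartbeats 1600000 in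
/-- the symmetry equations for the operator D₂ = ∂²G₂ + ∂G₁ + G₀. -/
theorem symmetry_equations_D2 (a b c : ℝ) (hc : c ≠ 0) (x : ℝ) :
    G2 a c x * W a b c x = W a b c x * (G2 a c x)ᵀ ∧
    (2 : ℝ) • mderiv (fun y => G2 a c y * W a b c y) x - G1 a c x * W a b c x
        = W a b c x * (G1 a c x)ᵀ ∧
    mderiv (mderiv (fun y => G2 a c y * W a b c y)) x
        - mderiv (fun y => G1 a c y * W a b c y) x
        + G0 a c * W a b c x = W a b c x * (G0 a c)ᵀ := by
  rw [G2t, G1t, G0t]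
  refine ⟨?_, ?_, ?_⟩
  · ext i j
    fin_cases i <;> fin_cases j <;>
      · simp [G2, W, Matrix.mul_apply, Matrix.transpose_apply, Fin.sum_univ_three]
        try ring
  · rw [mderiv_GW]
    ext i j
    fin_cases i <;> fin_cases j <;>
      · simp [G1, W, Matrix.mul_apply, Matrix.transpose_apply, Fin.sum_univ_three, Matrix.sub_apply,
          Matrix.smul_apply]
        try field_simp
        try ring
  · rw [mderiv_mderiv_GW, mderiv_G1W a b c x hc]
    ext i j
    fin_cases i <;> fin_cases j <;>
      · simp [G0, W, Matrix.mul_apply, Matrix.transpose_apply, Fin.sum_univ_three, Matrix.sub_apply,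
          Matrix.add_apply, Matrix.smul_apply]
        try field_simp
        try ring
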